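/- Under Assumptions (A1) and (A2), define the Robin–Robin reduction matrix R = θ·I − (1−θ)·T, where T = (S₂ − γ₁I)(γ₂I + S₂)⁻¹(γ₂I − S₁)(γ₁I + S₁)⁻¹ and the relaxation parameter is chosen as θ = (2t − 1)/(2t + 1). Then every complex eigenvalue μ of R is real and satisfies |μ| ≤ (2t − 1)/(2t + 1); that is, the spectrum of R is contained in [−(2t−1)/(2t+1), (2t−1)/(2t+1)], a bound independent of the matrices' dimension. -/

import Mathlib

open Matrix
open scoped ComplexOrder
open scoped MatrixOrder

set_option linter.unusedSectionVars false

section RRhelpers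

variable {n : Type*} [Fintype n] [DecidableEq n]

private lemma RR_eig_low (S : Matrix n n ℝ) (hS : S.IsHermitian) (m : ℝ)
    (hm : ∀ i, m ≤ hS.eigenvalues i) : (S - m • 1).PosSemidef := by
  have hU := mem_unitaryGroup_iff.mp hS.eigenvectorUnitary.2
  have hd : diagonal (fun i => hS.eigenvalues i - m) =
      diagonal (RCLike.ofReal ∘ hS.eigenvalues) - m • (1 : Matrix n n ℝ) := by
    ext i j
    by_cases h : i = j <;> simp [diagonal_apply, Matrix.one_apply, h, Function.comp]
  have key : S - m • 1 =
      (hS.eigenvectorUnitary : Matrix n n ℝ) * diagonal (fun i => hS.eigenvalues i - m) *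
        (hS.eigenvectorUnitary : Matrix n n ℝ)ᴴ := by
    have hsp := hS.spectral_theorem
    rw [star_eq_conjTranspose] at hU
    simp only [Unitary.conjStarAlgAut_apply, Unitary.coe_star, star_eq_conjTranspose] at hsp
    rw [hd]; simp only [Matrix.mul_sub, Matrix.sub_mul, Matrix.mul_smul, Matrix.smul_mul,
      hU, ← hsp, Matrix.mul_one]
  rw [key]
  exact (posSemidef_diagonal_iff.mpr fun i => sub_nonneg.mpr (hm i)).mul_mul_conjTranspose_same _

private lemma RR_eig_up (S : Matrix n n ℝ) (hS : S.IsHermitian) (m : ℝ)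
    (hm : ∀ i, hS.eigenvalues i ≤ m) : (m • 1 - S).PosSemidef := by
  have hU := mem_unitaryGroup_iff.mp hS.eigenvectorUnitary.2
  have hd : diagonal (fun i => m - hS.eigenvalues i) =
      m • (1 : Matrix n n ℝ) - diagonal (RCLike.ofReal ∘ hS.eigenvalues) := by
    ext i j
    by_cases h : i = j <;> simp [diagonal_apply, Matrix.one_apply, h, Function.comp]
  have key : m • 1 - S =
      (hS.eigenvectorUnitary : Matrix n n ℝ) * diagonal (fun i => m - hS.eigenvalues i) *
        (hS.eigenvectorUnitary : Matrix n n ℝ)ᴴ := by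
    have hsp := hS.spectral_theorem
    rw [star_eq_conjTranspose] at hU
    simp only [Unitary.conjStarAlgAut_apply, Unitary.coe_star, star_eq_conjTranspose] at hsp
    rw [hd]; simp only [Matrix.mul_sub, Matrix.sub_mul, Matrix.mul_smul, Matrix.smul_mul,
      hU, ← hsp, Matrix.mul_one]
  rw [key]
  exact (posSemidef_diagonal_iff.mpr fun i => sub_nonneg.mpr (hm i)).mul_mul_conjTranspose_same _

private lemma RR_herm_smul (c : ℝ) (M : Matrix n n ℝ) (h : M.IsHermitian) :
    (c • M).IsHermitian := by
  unfold Matrix.IsHermitian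
  rw [Matrix.conjTranspose_smul, h.eq, star_trivial]

private lemma RR_dot_symm (M : Matrix n n ℝ) (hM : M.IsHermitian) (x y : n → ℝ) :
    (M *ᵥ x) ⬝ᵥ y = x ⬝ᵥ (M *ᵥ y) := by
  have ht : Mᵀ = M := by
    rw [← Matrix.conjTranspose_eq_transpose_of_trivial]; exact hM.eq
  rw [Matrix.dotProduct_mulVec]
  conv_rhs => rw [← ht, Matrix.vecMul_transpose]

private lemma RR_psd_dot (P : Matrix n n ℝ) (hP : P.PosSemidef) (v : n → ℝ) :
    0 ≤ v ⬝ᵥ (P *ᵥ v) := by simpa using hP.dotProduct_mulVec_nonneg v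

private lemma RR_pd_dot (P : Matrix n n ℝ) (hP : P.PosDef) (v : n → ℝ) (hv : v ≠ 0) :
    0 < v ⬝ᵥ (P *ᵥ v) := by simpa using hP.dotProduct_mulVec_pos hv

private lemma RR_cs_posdef (M : Matrix n n ℝ) (hM : M.PosDef) (v : n → ℝ) :
    (v ⬝ᵥ v) ^ 2 ≤ ((M *ᵥ v) ⬝ᵥ v) * ((M⁻¹ *ᵥ v) ⬝ᵥ v) := by
  set W := CFC.sqrt M with hWdef
  have hWW : W * W = M := CFC.sqrt_mul_sqrt_self M hM.posSemidef.nonneg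
  have hWh : W.IsHermitian := (Matrix.nonneg_iff_posSemidef.mp (CFC.sqrt_nonneg M)).isHermitian
  have hdet : IsUnit W.det := by
    have h2 : W.det * W.det = M.det := by rw [← Matrix.det_mul, hWW]
    refine isUnit_iff_ne_zero.mpr fun h => ?_
    rw [h, mul_zero] at h2; exact hM.det_pos.ne' h2.symm
  have hMinv : M⁻¹ = W⁻¹ * W⁻¹ := by rw [← hWW, Matrix.mul_inv_rev]
  have hWinvh : (W⁻¹).IsHermitian := hWh.inv
  have hv : v ⬝ᵥ v = (W *ᵥ v) ⬝ᵥ (W⁻¹ *ᵥ v) := by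
    rw [RR_dot_symm W hWh, Matrix.mulVec_mulVec, Matrix.mul_nonsing_inv _ hdet,
      Matrix.one_mulVec]
  have hcs := Finset.sum_mul_sq_le_sq_mul_sq Finset.univ (fun i => (W *ᵥ v) i)
    (fun i => (W⁻¹ *ᵥ v) i)
  have h1 : (W *ᵥ v) ⬝ᵥ (W *ᵥ v) = (M *ᵥ v) ⬝ᵥ v := by
    rw [← RR_dot_symm W hWh, Matrix.mulVec_mulVec, hWW]
  have h2 : (W⁻¹ *ᵥ v) ⬝ᵥ (W⁻¹ *ᵥ v) = (M⁻¹ *ᵥ v) ⬝ᵥ v := by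
    rw [← RR_dot_symm _ hWinvh, Matrix.mulVec_mulVec, ← hMinv]
  calc (v ⬝ᵥ v) ^ 2 = ((W *ᵥ v) ⬝ᵥ (W⁻¹ *ᵥ v)) ^ 2 := by rw [hv]
    _ ≤ ((W *ᵥ v) ⬝ᵥ (W *ᵥ v)) * ((W⁻¹ *ᵥ v) ⬝ᵥ (W⁻¹ *ᵥ v)) := by
        simpa [dotProduct, sq] using hcs
    _ = ((M *ᵥ v) ⬝ᵥ v) * ((M⁻¹ *ᵥ v) ⬝ᵥ v) := by rw [h1, h2]

private lemma RR_key_scalar (t γ1 γ2 n a b gi mi : ℝ) (ht : 1 ≤ t) (hγ1 : 0 < γ1)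
    (hn : 0 < n) (ha : 0 < a) (hb : 0 < b) (hba : b ≤ t * a)
    (hg : 0 < γ2 * n - a)
    (hgi : n ^ 2 ≤ (γ2 * n - a) * gi) (hmi : n ^ 2 ≤ (γ2 * n + b) * mi) :
    2 * t * n ≤ (γ1 + γ2) * ((2 * t - 1) * gi + mi) := by
  have hm : 0 < γ2 * n + b := by nlinarith
  have h1 : 0 ≤ (2 * t - 1) * (γ1 * n + a) - (b - γ1 * n) := by
    nlinarith [mul_nonneg (by linarith : (0:ℝ) ≤ t - 1) ha.le, mul_pos hγ1 hn,
      mul_pos (mul_pos (by linarith : (0:ℝ) < t) hγ1) hn]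
  have hE : 2 * t * ((γ2 * n - a) * (γ2 * n + b)) ≤
      (γ1 + γ2) * (n * ((2 * t - 1) * (γ2 * n + b) + (γ2 * n - a))) := by
    nlinarith [mul_nonneg h1 hg.le,
      mul_nonneg (mul_nonneg (by linarith : (0:ℝ) ≤ 2 * t - 1)
        (by nlinarith : (0:ℝ) ≤ γ1 * n + a)) (by linarith : (0:ℝ) ≤ a + b)]
  have hgi' : 0 ≤ gi := nonneg_of_mul_nonneg_right (le_trans (by positivity) hgi) hg
  have hmi' : 0 ≤ mi := nonneg_of_mul_nonneg_right (le_trans (by positivity) hmi) hm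
  have hgm : 0 < (γ2 * n - a) * (γ2 * n + b) := mul_pos hg hm
  have hc : 0 < γ1 + γ2 := by nlinarith
  have step : 2 * t * n * ((γ2 * n - a) * (γ2 * n + b)) ≤
      ((γ1 + γ2) * ((2 * t - 1) * gi + mi)) * ((γ2 * n - a) * (γ2 * n + b)) := by
    have e1 := mul_le_mul_of_nonneg_right
      (mul_le_mul_of_nonneg_left hgi (by linarith : (0:ℝ) ≤ 2 * t - 1)) hm.le
    have e2 := mul_le_mul_of_nonneg_right hmi hg.le
    have e3 := mul_le_mul_of_nonneg_right hE hn.le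
    nlinarith [mul_le_mul_of_nonneg_left e1 hc.le, mul_le_mul_of_nonneg_left e2 hc.le]
  exact le_of_mul_le_mul_right step hgm

private lemma RR_ofReal_semiconj :
    Function.Semiconj Complex.ofReal (starRingEnd ℝ) (starRingEnd ℂ) := by
  intro a; simp [Complex.conj_ofReal]

private lemma RR_conjT_map (A : Matrix n n ℝ) :
    Aᴴ.map Complex.ofReal = (A.map Complex.ofReal)ᴴ :=
  Matrix.conjTranspose_map Complex.ofReal RR_ofReal_semiconj

private lemma RR_map_mul (A B : Matrix n n ℝ) :
    (A * B).map Complex.ofReal = A.map Complex.ofReal * B.map Complex.ofReal := by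
  show (A * B).map Complex.ofRealHom =
    A.map Complex.ofRealHom * B.map Complex.ofRealHom
  exact Matrix.map_mul

private lemma RR_map_psd (P : Matrix n n ℝ) (hP : P.PosSemidef) :
    (P.map Complex.ofReal).PosSemidef := by
  obtain ⟨B, rfl⟩ := CStarAlgebra.nonneg_iff_eq_star_mul_self.mp hP.nonneg
  rw [star_eq_conjTranspose, RR_map_mul, RR_conjT_map]
  exact Matrix.posSemidef_conjTranspose_mul_self _

private lemma RR_map_pd (P : Matrix n n ℝ) (hP : P.PosDef) :
    (P.map Complex.ofReal).PosDef := by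
  have hW : CFC.sqrt P * CFC.sqrt P = P := CFC.sqrt_mul_sqrt_self P hP.posSemidef.nonneg
  set W := CFC.sqrt P with hWdef
  have hWh : W.IsHermitian := (Matrix.nonneg_iff_posSemidef.mp (CFC.sqrt_nonneg P)).isHermitian
  have hdet : W.det ≠ 0 := by
    have h2 : W.det * W.det = P.det := by rw [← Matrix.det_mul, hW]
    intro h; rw [h, mul_zero] at h2; exact hP.det_pos.ne' h2.symm
  set C := W.map Complex.ofReal with hC
  have hCdet : IsUnit C.det := by
    have h3 : Complex.ofRealHom W.det = (Complex.ofRealHom.mapMatrix W).det :=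
      RingHom.map_det _ _
    rw [RingHom.mapMatrix_apply] at h3
    rw [hC]
    show IsUnit (W.map Complex.ofRealHom).det
    rw [← h3]
    simpa using hdet
  have hPC : P.map Complex.ofReal = Cᴴ * C := by
    conv_lhs => rw [← hW]
    rw [RR_map_mul, hC, ← RR_conjT_map, hWh.eq]
  rw [hPC]
  refine Matrix.PosDef.of_dotProduct_mulVec_pos (Matrix.isHermitian_conjTranspose_mul_self _) fun x hx => ?_
  rw [← mulVec_mulVec, dotProduct_mulVec, vecMul_conjTranspose, star_star]
  rw [dotProduct_star_self_pos_iff]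
  intro h0
  exact hx (Matrix.mulVec_injective_iff_isUnit.mpr
    ((Matrix.isUnit_iff_isUnit_det C).mpr hCdet) (by simpa using h0))

private lemma RR_pd_conj (P Y : Matrix n n ℝ) (hP : P.PosDef) (hY : IsUnit Y.det) :
    (Yᴴ * P * Y).PosDef := by
  refine Matrix.PosDef.of_dotProduct_mulVec_pos (Matrix.isHermitian_conjTranspose_mul_mul Y hP.isHermitian) fun x hx => ?_
  have hx' : Y *ᵥ x ≠ 0 := fun h =>
    hx (Matrix.mulVec_injective_iff_isUnit.mpr ((Matrix.isUnit_iff_isUnit_det Y).mpr hY)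
      (by simpa using h))
  simpa only [star_mulVec, dotProduct_mulVec, vecMul_vecMul] using hP.dotProduct_mulVec_pos hx'

end RRhelpers


/-- under Assumptions (A1) and (A2), the Robin–Robin reduction matrix
`R = θI - (1-θ)T` with `T = (S₂ - γ₁I)(γ₂I + S₂)⁻¹(γ₂I - S₁)(γ₁I + S₁)⁻¹` and
`θ = (2t - 1)/(2t + 1)` has only real eigenvalues, all of absolute value at most
`(2t - 1)/(2t + 1)`, a bound independent of the dimension `N`. -/
lemma RR_BDB {n : Type*} [Fintype n] [DecidableEq n] (r : ℝ) (B Binv A : Matrix n n ℝ)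
    (h : B * Binv = 1) : B * (r • Binv - A) * B = r • B - B * A * B := by
  rw [Matrix.mul_sub, Matrix.sub_mul, Matrix.mul_smul, Matrix.smul_mul, h, Matrix.one_mul]

set_option maxHeartbeats 1000000 in
theorem reduction_matrix_spectrum (N : ℕ) (hN : 1 ≤ N)
    (S1 S2 : Matrix (Fin N) (Fin N) ℝ) (hS1 : S1.PosDef) (hS2 : S2.PosDef)
    (lmin1 lmax1 lmin2 lmax2 : ℝ)
    (hlmin1 : IsLeast (Set.range hS1.isHermitian.eigenvalues) lmin1)
    (hlmax1 : IsGreatest (Set.range hS1.isHermitian.eigenvalues) lmax1)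
    (hlmin2 : IsLeast (Set.range hS2.isHermitian.eigenvalues) lmin2)
    (hlmax2 : IsGreatest (Set.range hS2.isHermitian.eigenvalues) lmax2)
    (s t : ℝ) (hs : 0 < s) (hs1 : s ≤ 1) (ht : 1 ≤ t)
    (hA1 : ∀ v : Fin N → ℝ,
      s * ((S1 *ᵥ v) ⬝ᵥ v) ≤ (S2 *ᵥ v) ⬝ᵥ v ∧ (S2 *ᵥ v) ⬝ᵥ v ≤ t * ((S1 *ᵥ v) ⬝ᵥ v))
    (γ1 γ2 : ℝ) (hγ1 : 0 < γ1) (hγ1' : γ1 ≤ min lmin1 lmin2)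
    (hγ2 : 3 * max lmax1 lmax2 ≤ γ2)
    (θ : ℝ) (hθ : θ = (2 * t - 1) / (2 * t + 1))
    (T R : Matrix (Fin N) (Fin N) ℝ)
    (hT : T = (S2 - γ1 • (1 : Matrix (Fin N) (Fin N) ℝ)) *
      (γ2 • (1 : Matrix (Fin N) (Fin N) ℝ) + S2)⁻¹ *
      (γ2 • (1 : Matrix (Fin N) (Fin N) ℝ) - S1) *
      (γ1 • (1 : Matrix (Fin N) (Fin N) ℝ) + S1)⁻¹)
    (hR : R = θ • (1 : Matrix (Fin N) (Fin N) ℝ) - (1 - θ) • T) :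
    ∀ μ : ℂ, μ ∈ spectrum ℂ (R.map (Complex.ofReal)) →
      μ.im = 0 ∧ ‖μ‖ ≤ (2 * t - 1) / (2 * t + 1) := by
  intro μ hμ
  -- ====== basic scalar facts ======
  have hlmax1pos : 0 < lmax1 := by
    obtain ⟨i, hi⟩ := hlmax1.1
    rw [← hi]; exact hS1.eigenvalues_pos i
  have hγ2lmax1 : 3 * lmax1 ≤ γ2 := le_trans (by nlinarith [le_max_left lmax1 lmax2]) hγ2
  have hγ2pos : 0 < γ2 := by nlinarith
  have h2t1 : (0:ℝ) < 2 * t + 1 := by linarith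
  have hθ0 : 0 ≤ θ := by rw [hθ]; exact div_nonneg (by linarith) (by linarith)
  have hθlt : θ < 1 := by rw [hθ, div_lt_one h2t1]; linarith
  have h1θ : (0:ℝ) < 1 - θ := by linarith
  -- ====== eigenvalue facts ======
  have hS1ub : ∀ i, hS1.isHermitian.eigenvalues i ≤ lmax1 := fun i => hlmax1.2 ⟨i, rfl⟩
  have hS2lb : ∀ i, γ1 ≤ hS2.isHermitian.eigenvalues i := fun i =>
    le_trans (le_trans hγ1' (min_le_right _ _)) (hlmin2.2 ⟨i, rfl⟩)
  have hP2 : (S2 - γ1 • 1).PosSemidef := RR_eig_low S2 hS2.isHermitian γ1 hS2lb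
  have hQ1 : (lmax1 • 1 - S1).PosSemidef := RR_eig_up S1 hS1.isHermitian lmax1 hS1ub
  have hS1quad : ∀ v : Fin N → ℝ, v ⬝ᵥ (S1 *ᵥ v) ≤ lmax1 * (v ⬝ᵥ v) := by
    intro v
    have := RR_psd_dot _ hQ1 v
    simp only [Matrix.sub_mulVec, Matrix.smul_mulVec, Matrix.one_mulVec,
      dotProduct_sub, dotProduct_smul, smul_eq_mul] at this
    linarith
  -- ====== the real matrices ======
  set c : ℝ := γ1 + γ2 with hc
  set K : Matrix (Fin N) (Fin N) ℝ := γ1 • 1 + S1 with hKdef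
  set M2 : Matrix (Fin N) (Fin N) ℝ := γ2 • 1 + S2 with hM2def
  set G : Matrix (Fin N) (Fin N) ℝ := γ2 • 1 - S1 with hGdef
  have hsmul1pd : ∀ a : ℝ, 0 < a → (a • (1 : Matrix (Fin N) (Fin N) ℝ)).PosDef := by
    intro a ha
    rw [Matrix.smul_one_eq_diagonal]
    exact Matrix.PosDef.diagonal fun _ => ha
  have hKpd : K.PosDef := (hsmul1pd γ1 hγ1).add hS1
  have hM2pd : M2.PosDef := (hsmul1pd γ2 hγ2pos).add hS2
  have hGpd : G.PosDef := by
    refine Matrix.PosDef.of_dotProduct_mulVec_pos ((RR_herm_smul γ2 1 Matrix.isHermitian_one).sub hS1.isHermitian) fun x hx => ?_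
    have h1 := hS1quad x
    have h2 : 0 < x ⬝ᵥ x := by simpa using Matrix.dotProduct_star_self_pos_iff.mpr hx
    have : (star x) ⬝ᵥ (G *ᵥ x) = γ2 * (x ⬝ᵥ x) - x ⬝ᵥ (S1 *ᵥ x) := by
      simp [hGdef, Matrix.sub_mulVec, Matrix.smul_mulVec, Matrix.one_mulVec,
        dotProduct_sub, dotProduct_smul, smul_eq_mul]
    rw [this]
    nlinarith
  have hKdet : IsUnit K.det := hKpd.det_pos.ne'.isUnit
  have hM2det : IsUnit M2.det := hM2pd.det_pos.ne'.isUnit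
  have hGdet : IsUnit G.det := hGpd.det_pos.ne'.isUnit
  have hKh := hKpd.isHermitian
  have hM2h := hM2pd.isHermitian
  have hGh := hGpd.isHermitian
  -- decompositions
  have hS2e : S2 - γ1 • (1 : Matrix (Fin N) (Fin N) ℝ) = M2 - c • 1 := by
    rw [hM2def, hc, add_smul]; abel
  have hGe : G = c • (1 : Matrix (Fin N) (Fin N) ℝ) - K := by
    rw [hKdef, hGdef, hc, add_smul]; abel
  have hKe : K = c • (1 : Matrix (Fin N) (Fin N) ℝ) - G := by rw [hGe]; abel
  set A : Matrix (Fin N) (Fin N) ℝ := 1 - c • M2⁻¹ with hAdef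
  set B : Matrix (Fin N) (Fin N) ℝ := c • K⁻¹ - 1 with hBdef
  set Binv : Matrix (Fin N) (Fin N) ℝ := c • G⁻¹ - 1 with hBinvdef
  have hA_eq : (S2 - γ1 • 1) * M2⁻¹ = A := by
    rw [hS2e, Matrix.sub_mul, Matrix.mul_nonsing_inv _ hM2det, Matrix.smul_mul,
      Matrix.one_mul, hAdef]
  have hB_eq : G * K⁻¹ = B := by
    rw [hGe, Matrix.sub_mul, Matrix.mul_nonsing_inv _ hKdet, Matrix.smul_mul,
      Matrix.one_mul, hBdef]
  have hBinv_eq : K * G⁻¹ = Binv := by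
    rw [hKe, Matrix.sub_mul, Matrix.mul_nonsing_inv _ hGdet, Matrix.smul_mul,
      Matrix.one_mul, hBinvdef]
  have hTAB : T = A * B := by
    rw [hT, Matrix.mul_assoc ((S2 - γ1 • 1) * M2⁻¹) G K⁻¹, hA_eq, hB_eq]
  have hBBinv : B * Binv = 1 := by
    rw [← hB_eq, ← hBinv_eq, Matrix.mul_assoc, ← Matrix.mul_assoc K⁻¹ K _,
      Matrix.nonsing_inv_mul _ hKdet, Matrix.one_mul, Matrix.mul_nonsing_inv _ hGdet]
  -- hermitian properties
  have hAh : A.IsHermitian := Matrix.isHermitian_one.sub (RR_herm_smul c _ hM2h.inv)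
  have hBh : B.IsHermitian := (RR_herm_smul c _ hKh.inv).sub Matrix.isHermitian_one
  have hBinvh : Binv.IsHermitian := (RR_herm_smul c _ hGh.inv).sub Matrix.isHermitian_one
  -- ====== A is PSD, B is PD (congruence with sqrt inverses) ======
  have sqrt_fact : ∀ (P : Matrix (Fin N) (Fin N) ℝ) (hP : P.PosDef),
      ∃ W : Matrix (Fin N) (Fin N) ℝ, W * W = P ∧ W.IsHermitian ∧ IsUnit W.det := by
    intro P hP
    refine ⟨CFC.sqrt P, CFC.sqrt_mul_sqrt_self P hP.posSemidef.nonneg,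
      (Matrix.nonneg_iff_posSemidef.mp (CFC.sqrt_nonneg P)).isHermitian, ?_⟩
    have h2 : (CFC.sqrt P).det * (CFC.sqrt P).det = P.det := by
      rw [← Matrix.det_mul, CFC.sqrt_mul_sqrt_self P hP.posSemidef.nonneg]
    refine isUnit_iff_ne_zero.mpr fun h => ?_
    rw [h, mul_zero] at h2; exact hP.det_pos.ne' h2.symm
  obtain ⟨W2, hW2, hW2h, hW2det⟩ := sqrt_fact M2 hM2pd
  obtain ⟨W1, hW1, hW1h, hW1det⟩ := sqrt_fact K hKpd
  have hW2invh : (W2⁻¹).IsHermitian := hW2h.inv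
  have hW1invh : (W1⁻¹).IsHermitian := hW1h.inv
  have hW2inv2 : W2⁻¹ * W2⁻¹ = M2⁻¹ := by rw [← Matrix.mul_inv_rev, hW2]
  have hW1inv2 : W1⁻¹ * W1⁻¹ = K⁻¹ := by rw [← Matrix.mul_inv_rev, hW1]
  have hA_conj : A = (W2⁻¹)ᴴ * (S2 - γ1 • 1) * W2⁻¹ := by
    have e1 : (W2⁻¹)ᴴ * (S2 - γ1 • 1) * W2⁻¹ = W2⁻¹ * M2 * W2⁻¹ - c • (W2⁻¹ * W2⁻¹) := by
      rw [hW2invh.eq, hS2e, Matrix.mul_sub, Matrix.sub_mul, Matrix.mul_smul,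
        Matrix.mul_one, Matrix.smul_mul]
    have e2 : W2⁻¹ * M2 * W2⁻¹ = 1 := by
      rw [← hW2, ← Matrix.mul_assoc W2⁻¹ W2 W2, Matrix.nonsing_inv_mul _ hW2det,
        Matrix.one_mul, Matrix.mul_nonsing_inv _ hW2det]
    rw [e1, e2, hW2inv2, hAdef]
  have hB_conj : B = (W1⁻¹)ᴴ * G * W1⁻¹ := by
    have e1 : (W1⁻¹)ᴴ * G * W1⁻¹ = c • (W1⁻¹ * W1⁻¹) - W1⁻¹ * K * W1⁻¹ := by
      rw [hW1invh.eq, hGe, Matrix.mul_sub, Matrix.sub_mul, Matrix.mul_smul,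
        Matrix.mul_one, Matrix.smul_mul]
    have e2 : W1⁻¹ * K * W1⁻¹ = 1 := by
      rw [← hW1, ← Matrix.mul_assoc W1⁻¹ W1 W1, Matrix.nonsing_inv_mul _ hW1det,
        Matrix.one_mul, Matrix.mul_nonsing_inv _ hW1det]
    rw [e1, e2, hW1inv2, hBdef]
  have hW2invdet : IsUnit (W2⁻¹).det := W2.isUnit_nonsing_inv_det hW2det
  have hW1invdet : IsUnit (W1⁻¹).det := W1.isUnit_nonsing_inv_det hW1det
  have hApsd : A.PosSemidef := by
    rw [hA_conj]
    exact hP2.conjTranspose_mul_mul_same W2⁻¹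
  have hBpd : B.PosDef := by
    rw [hB_conj]
    exact RR_pd_conj G W1⁻¹ hGpd hW1invdet
  -- ====== D := (2t-1) • Binv - A is PSD ======
  set D : Matrix (Fin N) (Fin N) ℝ := (2 * t - 1) • Binv - A with hDdef
  have hDh : D.IsHermitian := (RR_herm_smul _ _ hBinvh).sub hAh
  have hGinvpd : G⁻¹.PosDef := hGpd.inv
  have hM2invpd : M2⁻¹.PosDef := hM2pd.inv
  have hDpsd : D.PosSemidef := by
    refine Matrix.PosSemidef.of_dotProduct_mulVec_nonneg hDh fun v => ?_
    rw [star_trivial]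
    by_cases hv : v = 0
    · simp [hv]
    have hexp : v ⬝ᵥ (D *ᵥ v) =
        (2 * t - 1) * (c * (v ⬝ᵥ (G⁻¹ *ᵥ v))) - (2 * t - 1) * (v ⬝ᵥ v)
          - (v ⬝ᵥ v) + c * (v ⬝ᵥ (M2⁻¹ *ᵥ v)) := by
      simp only [hDdef, hBinvdef, hAdef, Matrix.sub_mulVec, Matrix.smul_mulVec,
        Matrix.one_mulVec, dotProduct_sub, dotProduct_smul, smul_eq_mul]
      ring
    have hnn : 0 < v ⬝ᵥ v := by simpa using Matrix.dotProduct_star_self_pos_iff.mpr hv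
    have ha : 0 < v ⬝ᵥ (S1 *ᵥ v) := by
      have := hS1.dotProduct_mulVec_pos hv; simpa [dotProduct_comm] using this
    have hb : 0 < v ⬝ᵥ (S2 *ᵥ v) := by
      have := hS2.dotProduct_mulVec_pos hv; simpa [dotProduct_comm] using this
    have hba : v ⬝ᵥ (S2 *ᵥ v) ≤ t * (v ⬝ᵥ (S1 *ᵥ v)) := by
      have := (hA1 v).2; simpa [dotProduct_comm] using this
    have hgq : (G *ᵥ v) ⬝ᵥ v = γ2 * (v ⬝ᵥ v) - v ⬝ᵥ (S1 *ᵥ v) := by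
      simp [hGdef, Matrix.sub_mulVec, Matrix.smul_mulVec, Matrix.one_mulVec,
        dotProduct_sub, dotProduct_smul, smul_eq_mul, sub_dotProduct, smul_dotProduct,
        dotProduct_comm]
    have hmq : (M2 *ᵥ v) ⬝ᵥ v = γ2 * (v ⬝ᵥ v) + v ⬝ᵥ (S2 *ᵥ v) := by
      simp [hM2def, Matrix.add_mulVec, Matrix.smul_mulVec, Matrix.one_mulVec,
        add_dotProduct, smul_dotProduct, smul_eq_mul, dotProduct_comm]
    have hgpos : 0 < γ2 * (v ⬝ᵥ v) - v ⬝ᵥ (S1 *ᵥ v) := by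
      rw [← hgq]; rw [dotProduct_comm]; exact RR_pd_dot G hGpd v hv
    have hgi : (v ⬝ᵥ v) ^ 2 ≤ (γ2 * (v ⬝ᵥ v) - v ⬝ᵥ (S1 *ᵥ v)) * (v ⬝ᵥ (G⁻¹ *ᵥ v)) := by
      have := RR_cs_posdef G hGpd v
      rwa [hgq, dotProduct_comm (G⁻¹ *ᵥ v) v] at this
    have hmi : (v ⬝ᵥ v) ^ 2 ≤ (γ2 * (v ⬝ᵥ v) + v ⬝ᵥ (S2 *ᵥ v)) * (v ⬝ᵥ (M2⁻¹ *ᵥ v)) := by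
      have := RR_cs_posdef M2 hM2pd v
      rwa [hmq, dotProduct_comm (M2⁻¹ *ᵥ v) v] at this
    have key := RR_key_scalar t γ1 γ2 (v ⬝ᵥ v) (v ⬝ᵥ (S1 *ᵥ v)) (v ⬝ᵥ (S2 *ᵥ v))
      (v ⬝ᵥ (G⁻¹ *ᵥ v)) (v ⬝ᵥ (M2⁻¹ *ᵥ v)) ht hγ1 hnn ha hb hba hgpos hgi hmi
    rw [hexp, hc]
    nlinarith [key]
  -- ====== transfer to C3 := B * A * B and the upper bound matrix ======
  set C3 : Matrix (Fin N) (Fin N) ℝ := B * A * B with hC3def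
  have hC3psd : C3.PosSemidef := by
    have := hApsd.mul_mul_conjTranspose_same B
    rwa [hBh.eq] at this
  have hBDB : B * D * B = (2 * t - 1) • B - C3 := by
    rw [hDdef, hC3def]
    exact RR_BDB _ _ _ _ hBBinv
  have hUpp : ((2 * t - 1) • B - C3).PosSemidef := by
    rw [← hBDB]
    have := hDpsd.mul_mul_conjTranspose_same B
    rwa [hBh.eq] at this
  -- ====== complex part ======
  have RR_map_smul : ∀ (r : ℝ) (M : Matrix (Fin N) (Fin N) ℝ),
      (r • M).map Complex.ofReal = (r : ℂ) • M.map Complex.ofReal := by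
    intro r M; ext i j; simp
  have RR_map_sub : ∀ (M P : Matrix (Fin N) (Fin N) ℝ),
      (M - P).map Complex.ofReal = M.map Complex.ofReal - P.map Complex.ofReal := by
    intro M P; ext i j; simp
  have RR_map_one : (1 : Matrix (Fin N) (Fin N) ℝ).map Complex.ofReal = 1 := by
    ext i j; by_cases h : i = j <;> simp [Matrix.one_apply, h]
  have hRmap : R.map Complex.ofReal =
      (θ : ℂ) • 1 - ((1 - θ : ℝ) : ℂ) • (T.map Complex.ofReal) := by
    rw [hR, RR_map_sub, RR_map_smul, RR_map_smul, RR_map_one]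
  rw [spectrum.mem_iff] at hμ
  have hdet0 : ((algebraMap ℂ (Matrix (Fin N) (Fin N) ℂ)) μ - R.map Complex.ofReal).det = 0 := by
    by_contra hne
    exact hμ ((Matrix.isUnit_iff_isUnit_det _).mpr (isUnit_iff_ne_zero.mpr hne))
  obtain ⟨v, hv0, hveq⟩ := Matrix.exists_mulVec_eq_zero_iff.mpr hdet0
  have hRv : (R.map Complex.ofReal) *ᵥ v = μ • v := by
    rw [Matrix.sub_mulVec, sub_eq_zero, Algebra.algebraMap_eq_smul_one,
      Matrix.smul_mulVec, Matrix.one_mulVec] at hveq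
    exact hveq.symm
  have hne : (1 : ℂ) - (θ : ℂ) ≠ 0 := by
    have : ((1 - θ : ℝ) : ℂ) ≠ 0 := Complex.ofReal_ne_zero.mpr h1θ.ne'
    push_cast at this; exact this
  set τ : ℂ := ((θ : ℂ) - μ) / ((1 : ℂ) - (θ : ℂ)) with hτdef
  have hτv : (T.map Complex.ofReal) *ᵥ v = τ • v := by
    rw [hRmap] at hRv
    simp only [Matrix.sub_mulVec, Matrix.smul_mulVec, Matrix.one_mulVec] at hRv
    funext i
    have hi := congrFun hRv i
    simp only [Pi.sub_apply, Pi.smul_apply, smul_eq_mul, Complex.ofReal_sub,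
      Complex.ofReal_one] at hi
    simp only [Pi.smul_apply, smul_eq_mul, hτdef]
    rw [div_mul_eq_mul_div, eq_div_iff hne]
    linear_combination -hi
  have hC3T : C3 = B * T := by rw [hC3def, hTAB, Matrix.mul_assoc]
  set Bc := B.map Complex.ofReal with hBcdef
  set β : ℂ := star v ⬝ᵥ (Bc *ᵥ v) with hβdef
  set q : ℂ := star v ⬝ᵥ ((C3.map Complex.ofReal) *ᵥ v) with hqdef
  have hq : q = τ * β := by
    rw [hqdef, hC3T, RR_map_mul, ← Matrix.mulVec_mulVec, hτv, Matrix.mulVec_smul,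
      dotProduct_smul, smul_eq_mul, hβdef, hBcdef]
  have hβpos : 0 < β := (RR_map_pd B hBpd).dotProduct_mulVec_pos hv0
  have hβre : 0 < β.re := by
    rw [Complex.lt_def] at hβpos; exact hβpos.1
  have hβim : β.im = 0 := by
    rw [Complex.lt_def] at hβpos; exact hβpos.2.symm
  have hqnn : 0 ≤ q := (RR_map_psd C3 hC3psd).dotProduct_mulVec_nonneg v
  have hqre : 0 ≤ q.re := by rw [Complex.le_def] at hqnn; exact hqnn.1
  have hqim : q.im = 0 := by rw [Complex.le_def] at hqnn; exact hqnn.2.symm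
  have hupp : 0 ≤ ((2 * t - 1 : ℝ) : ℂ) * β - q := by
    have h0 := (RR_map_psd _ hUpp).dotProduct_mulVec_nonneg v
    rw [RR_map_sub, RR_map_smul, Matrix.sub_mulVec, Matrix.smul_mulVec,
      dotProduct_sub, dotProduct_smul, smul_eq_mul, ← hBcdef, ← hβdef, ← hqdef] at h0
    exact h0
  have huppre : q.re ≤ (2 * t - 1) * β.re := by
    rw [Complex.le_def] at hupp
    have := hupp.1
    simp only [Complex.sub_re, Complex.mul_re, Complex.ofReal_re, Complex.ofReal_im,
      Complex.zero_re, hβim, mul_zero, zero_mul, sub_zero] at this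
    linarith
  have hβc : β = ((β.re : ℝ) : ℂ) := Complex.ext (by simp) (by simp [hβim])
  have hqc : q = ((q.re : ℝ) : ℂ) := Complex.ext (by simp) (by simp [hqim])
  have hβne : ((β.re : ℝ) : ℂ) ≠ 0 := Complex.ofReal_ne_zero.mpr hβre.ne'
  have hτx : τ = ((q.re / β.re : ℝ) : ℂ) := by
    rw [Complex.ofReal_div, eq_div_iff hβne, ← hβc, ← hq]
    exact hqc
  set x : ℝ := q.re / β.re with hxdef
  have hx0 : 0 ≤ x := div_nonneg hqre hβre.le
  have hx1 : x ≤ 2 * t - 1 := by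
    rw [hxdef, div_le_iff₀ hβre]; linarith
  have hμeq : μ = (θ : ℂ) - ((1 : ℂ) - (θ : ℂ)) * τ := by
    rw [hτdef, mul_div_cancel₀ _ hne]; ring
  have hμre : μ = ((θ - (1 - θ) * x : ℝ) : ℂ) := by
    rw [hμeq, hτx]; push_cast; ring
  constructor
  · rw [hμre]; simp
  · rw [hμre, Complex.norm_real, Real.norm_eq_abs, ← hθ]
    have hθd : θ * (2 * t + 1) = 2 * t - 1 := by
      rw [hθ]; field_simp
    have hid : (1 - θ) * (2 * t - 1) = 2 * θ := by linear_combination -hθd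
    have hxle : (1 - θ) * x ≤ (1 - θ) * (2 * t - 1) :=
      mul_le_mul_of_nonneg_left hx1 h1θ.le
    have hxnn : 0 ≤ (1 - θ) * x := mul_nonneg h1θ.le hx0
    rw [abs_le]
    constructor <;> nlinarith
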